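/- Let E_1,…,E_n be d′×d complex matrices with ∑_{k=1}^n E_k† E_k = I_d, and suppose n² < 2d − 1. Then α(E) > 1: there exist unit vectors ψ, φ ∈ ℂ^d such that tr[E(|ψ⟩⟨ψ|)·E(|φ⟩⟨φ|)] = 0, where E(ρ) = ∑_k E_k ρ E_k†. -/

import Mathlib

open Matrix MvPolynomial

noncomputable section AuxPoly

variable {d : ℕ}

/-- weight counting x-variables -/
def wA (d : ℕ) : (Fin d ⊕ Fin d) → ℕ := Sum.elim (fun _ => 1) (fun _ => 0)
/-- weight counting y-variables -/
def wB (d : ℕ) : (Fin d ⊕ Fin d) → ℕ := Sum.elim (fun _ => 0) (fun _ => 1)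

/-- bidegree (n,n) part -/
def Vsp (d n : ℕ) : Submodule ℂ (MvPolynomial (Fin d ⊕ Fin d) ℂ) :=
  (weightedHomogeneousSubmodule ℂ (wA d) n) ⊓ (weightedHomogeneousSubmodule ℂ (wB d) n)

lemma mul_mem_Vsp {q f : MvPolynomial (Fin d ⊕ Fin d) ℂ} {n : ℕ}
    (hq : q ∈ Vsp d 1) (hf : f ∈ Vsp d n) : q * f ∈ Vsp d (n + 1) := by
  have h1 := hq.1.mul hf.1
  have h2 := hq.2.mul hf.2
  rw [add_comm] at h1 h2
  exact ⟨h1, h2⟩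

lemma wA_add_wB (x : Fin d ⊕ Fin d) : wA d x + wB d x = 1 := by
  cases x <;> rfl

lemma degree_eq_of_mem_Vsp {f : MvPolynomial (Fin d ⊕ Fin d) ℂ} {n : ℕ}
    (hf : f ∈ Vsp d n) {μ : (Fin d ⊕ Fin d) →₀ ℕ} (hμ : μ ∈ f.support) :
    μ.degree = 2 * n := by
  have h1 : Finsupp.weight (wA d) μ = n := hf.1 (by simpa using hμ)
  have h2 : Finsupp.weight (wB d) μ = n := hf.2 (by simpa using hμ)
  have : μ.degree = Finsupp.weight (wA d) μ + Finsupp.weight (wB d) μ := by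
    rw [Finsupp.degree, Finsupp.weight_apply, Finsupp.weight_apply, Finsupp.sum, Finsupp.sum,
      ← Finset.sum_add_distrib]
    apply Finset.sum_congr rfl
    intro x _
    simp only [smul_eq_mul, ← Nat.mul_add, wA_add_wB, mul_one]
  omega

/-- the finite set of bidegree-(n,n) monomial exponents -/
lemma Vsp_le_span_monomials (d n : ℕ) :
    Vsp d n ≤ Submodule.span ℂ
      ((fun μ => (monomial μ (1:ℂ) : MvPolynomial (Fin d ⊕ Fin d) ℂ)) ''
        {μ | Finsupp.weight (wA d) μ = n ∧ Finsupp.weight (wB d) μ = n}) := by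
  intro f hf
  rw [f.as_sum]
  refine Submodule.sum_mem _ (fun μ hμ => ?_)
  have : (monomial μ (coeff μ f)) = (coeff μ f) • (monomial μ (1:ℂ)) := by
    rw [smul_monomial, smul_eq_mul, mul_one]
  rw [this]
  refine Submodule.smul_mem _ _ (Submodule.subset_span ?_)
  exact ⟨μ, ⟨hf.1 (by simpa using hμ), hf.2 (by simpa using hμ)⟩, rfl⟩

instance Vsp_fd (d n : ℕ) : FiniteDimensional ℂ (Vsp d n) := by
  have hfin : Set.Finite {μ : (Fin d ⊕ Fin d) →₀ ℕ |
      Finsupp.weight (wA d) μ = n ∧ Finsupp.weight (wB d) μ = n} := by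
    have hs : {μ : (Fin d ⊕ Fin d) →₀ ℕ | Finsupp.weight (wA d) μ = n ∧ Finsupp.weight (wB d) μ = n}
        ⊆ {μ | μ.degree ≤ 2 * n} := by
      intro μ hμ
      have : μ.degree = Finsupp.weight (wA d) μ + Finsupp.weight (wB d) μ := by
        rw [Finsupp.degree, Finsupp.weight_apply, Finsupp.weight_apply, Finsupp.sum, Finsupp.sum,
          ← Finset.sum_add_distrib]
        apply Finset.sum_congr rfl
        intro x _
        simp only [smul_eq_mul, ← Nat.mul_add, wA_add_wB, mul_one]
      simp only [Set.mem_setOf_eq] at hμ ⊢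
      omega
    exact Set.Finite.subset (Finsupp.finite_of_degree_le (2*n)) hs
  haveI := FiniteDimensional.span_of_finite ℂ (hfin.image
    (fun μ => (monomial μ (1:ℂ) : MvPolynomial (Fin d ⊕ Fin d) ℂ)))
  exact Submodule.finiteDimensional_of_le (Vsp_le_span_monomials d n)

end AuxPoly
namespace AuxPoly

variable {d : ℕ}

/-- partial ideal graded pieces -/
noncomputable def Wd (P : ℕ → MvPolynomial (Fin d ⊕ Fin d) ℂ) :
    ℕ → ℕ → Submodule ℂ (MvPolynomial (Fin d ⊕ Fin d) ℂ)
  | 0, _ => ⊥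
  | _ + 1, 0 => ⊥
  | j + 1, n + 1 => Wd P j (n + 1) ⊔ (Vsp d n).map (LinearMap.mulLeft ℂ (P j))

variable {P : ℕ → MvPolynomial (Fin d ⊕ Fin d) ℂ}

lemma Wd_zero_right (j : ℕ) : Wd P j 0 = ⊥ := by
  cases j <;> rfl

lemma Wd_succ_succ (j n : ℕ) :
    Wd P (j+1) (n+1) = Wd P j (n+1) ⊔ (Vsp d n).map (LinearMap.mulLeft ℂ (P j)) := rfl

lemma Wd_le_Vsp (hP : ∀ i, P i ∈ Vsp d 1) (j n : ℕ) : Wd P j n ≤ Vsp d n := by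
  induction j with
  | zero => exact bot_le
  | succ j ih =>
    cases n with
    | zero => exact bot_le
    | succ n =>
      rw [Wd_succ_succ]
      refine sup_le ih ?_
      rintro f ⟨g, hg, rfl⟩
      exact mul_mem_Vsp (hP j) hg

lemma Wd_mono (j j' n : ℕ) (h : j ≤ j') : Wd P j n ≤ Wd P j' n := by
  induction j' with
  | zero => exact Nat.le_zero.1 h ▸ le_rfl
  | succ j' ih =>
    rcases Nat.lt_or_ge j (j'+1) with h' | h'
    · cases n with
      | zero => rw [Wd_zero_right, Wd_zero_right]
      | succ n => exact le_trans (ih (by omega)) (by rw [Wd_succ_succ]; exact le_sup_left)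
    · have : j = j' + 1 := by omega
      subst this; exact le_rfl

lemma mul_Wd_le (hP : ∀ i, P i ∈ Vsp d 1) {q : MvPolynomial (Fin d ⊕ Fin d) ℂ}
    (hq : q ∈ Vsp d 1) (j n : ℕ) {f : MvPolynomial (Fin d ⊕ Fin d) ℂ}
    (hf : f ∈ Wd P j n) : q * f ∈ Wd P j (n+1) := by
  induction j generalizing f with
  | zero =>
    have h0 : Wd P 0 n = (⊥ : Submodule ℂ (MvPolynomial (Fin d ⊕ Fin d) ℂ)) := by cases n <;> rfl
    rw [h0, Submodule.mem_bot] at hf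
    have h1 : Wd P 0 (n+1) = (⊥ : Submodule ℂ (MvPolynomial (Fin d ⊕ Fin d) ℂ)) := rfl
    rw [h1, Submodule.mem_bot, hf, mul_zero]
  | succ j ih =>
    cases n with
    | zero =>
      rw [Wd_zero_right] at hf
      simp only [Submodule.mem_bot] at hf
      simp [hf]
    | succ n =>
      rw [Wd_succ_succ] at hf
      rw [Wd_succ_succ]
      rcases Submodule.mem_sup.1 hf with ⟨w, hw, c, hc, rfl⟩
      rw [mul_add]
      refine Submodule.add_mem _ (Submodule.mem_sup_left (ih hw)) ?_
      rcases hc with ⟨v, hv, rfl⟩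
      refine Submodule.mem_sup_right ?_
      have : q * (LinearMap.mulLeft ℂ (P j)) v = (LinearMap.mulLeft ℂ (P j)) (q * v) := by
        simp [LinearMap.mulLeft_apply]; ring
      rw [this]
      exact Submodule.mem_map_of_mem (mul_mem_Vsp hq hv)

lemma map_mul_le_Wd (i j n : ℕ) (hij : i < j) :
    (Vsp d n).map (LinearMap.mulLeft ℂ (P i)) ≤ Wd P j (n+1) := by
  induction j with
  | zero => omega
  | succ j ih =>
    rw [Wd_succ_succ]
    rcases Nat.lt_or_ge i j with h | h
    · exact le_trans (ih h) le_sup_left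
    · have : i = j := by omega
      subst this; exact le_sup_right

/-- dimension of the graded quotients -/
noncomputable def hdim (P : ℕ → MvPolynomial (Fin d ⊕ Fin d) ℂ) (j n : ℕ) : ℕ :=
  Module.finrank ℂ ((Vsp d n) ⧸ ((Wd P j n).comap (Vsp d n).subtype))

lemma comap_subtype_sup_of_le {R M : Type*} [Ring R] [AddCommGroup M] [Module R M]
    {V X Y : Submodule R M} (hX : X ≤ V) (hY : Y ≤ V) :
    (X ⊔ Y).comap V.subtype = X.comap V.subtype ⊔ Y.comap V.subtype := by
  refine le_antisymm ?_ (sup_le (Submodule.comap_mono le_sup_left)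
    (Submodule.comap_mono le_sup_right))
  rintro ⟨v, hv⟩ hmem
  simp only [Submodule.mem_comap, Submodule.subtype_apply] at hmem
  rcases Submodule.mem_sup.1 hmem with ⟨x, hx, y, hy, hxy⟩
  refine Submodule.mem_sup.2 ⟨⟨x, hX hx⟩, by simpa using hx, ⟨y, hY hy⟩, by simpa using hy, ?_⟩
  ext
  exact hxy

lemma hdim_zero_right (j : ℕ) : hdim P j 0 = Module.finrank ℂ (Vsp d 0) := by
  unfold hdim
  rw [Wd_zero_right]
  have : (⊥ : Submodule ℂ (MvPolynomial (Fin d ⊕ Fin d) ℂ)).comap (Vsp d 0).subtype = ⊥ := by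
    simp [Submodule.eq_bot_iff, Submodule.mem_comap]
  rw [this]
  exact (Submodule.quotEquivOfEqBot _ rfl).finrank_eq

lemma hdim_le (hP : ∀ i, P i ∈ Vsp d 1) (j n : ℕ) :
    hdim P j (n+1) ≤ hdim P (j+1) (n+1) + hdim P j n := by
  classical
  set V := Vsp d (n+1) with hV
  set A : Submodule ℂ V := (Wd P j (n+1)).comap V.subtype with hA
  set B : Submodule ℂ V := (Wd P (j+1) (n+1)).comap V.subtype with hB
  have hAB : A ≤ B := Submodule.comap_mono (Wd_mono j (j+1) (n+1) (by omega))
  -- rank-nullity on the quotient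
  have e1 : Module.finrank ℂ (V ⧸ A) =
      Module.finrank ℂ ((V ⧸ A) ⧸ (B.map A.mkQ)) + Module.finrank ℂ (B.map A.mkQ) :=
    (Submodule.finrank_quotient_add_finrank (B.map A.mkQ)).symm
  have e2 : Module.finrank ℂ ((V ⧸ A) ⧸ (B.map A.mkQ)) = Module.finrank ℂ (V ⧸ B) :=
    (Submodule.quotientQuotientEquivQuotient A B hAB).finrank_eq
  -- the multiplication map
  have hres : ∀ x ∈ Vsp d n, (LinearMap.mulLeft ℂ (P j)) x ∈ V := by
    intro x hx
    exact mul_mem_Vsp (hP j) hx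
  set f1 : Vsp d n →ₗ[ℂ] V := (LinearMap.mulLeft ℂ (P j)).restrict hres with hf1
  set φ : Vsp d n →ₗ[ℂ] (V ⧸ A) := A.mkQ.comp f1 with hφ
  -- kernel bound
  have hker : (Wd P j n).comap (Vsp d n).subtype ≤ LinearMap.ker φ := by
    rintro ⟨x, hx⟩ hmem
    simp only [Submodule.mem_comap, Submodule.subtype_apply] at hmem
    simp only [LinearMap.mem_ker, hφ, LinearMap.comp_apply]
    rw [Submodule.mkQ_apply, Submodule.Quotient.mk_eq_zero]
    simp only [hA, Submodule.mem_comap, Submodule.subtype_apply]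
    have : (f1 ⟨x, hx⟩ : MvPolynomial (Fin d ⊕ Fin d) ℂ) = P j * x := rfl
    rw [this]
    exact mul_Wd_le hP (hP j) j n hmem
  -- range covers B.map A.mkQ
  have hrange : B.map A.mkQ ≤ LinearMap.range φ := by
    rintro z ⟨b, hb, rfl⟩
    have hb' : (b : MvPolynomial (Fin d ⊕ Fin d) ℂ) ∈
        Wd P j (n+1) ⊔ (Vsp d n).map (LinearMap.mulLeft ℂ (P j)) := by
      rw [← Wd_succ_succ]; exact hb
    rcases Submodule.mem_sup.1 hb' with ⟨w, hw, c, hc, hwc⟩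
    rcases hc with ⟨v, hv, rfl⟩
    have hwV : w ∈ V := Wd_le_Vsp hP j (n+1) hw
    have hcV : (LinearMap.mulLeft ℂ (P j)) v ∈ V := hres v hv
    have hbsum : b = (⟨w, hwV⟩ : V) + ⟨_, hcV⟩ := by
      apply Subtype.ext
      simpa using hwc.symm
    refine ⟨⟨v, hv⟩, ?_⟩
    have h0 : A.mkQ (⟨w, hwV⟩ : V) = 0 := by
      rw [Submodule.mkQ_apply, Submodule.Quotient.mk_eq_zero]
      simpa [hA, Submodule.mem_comap] using hw
    rw [hbsum, map_add, h0, zero_add]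
    rfl
  -- conclude
  have hr1 : Module.finrank ℂ (B.map A.mkQ) ≤ Module.finrank ℂ (LinearMap.range φ) :=
    Submodule.finrank_mono hrange
  have hr2 : Module.finrank ℂ (LinearMap.range φ) + Module.finrank ℂ (LinearMap.ker φ) =
      Module.finrank ℂ (Vsp d n) := LinearMap.finrank_range_add_finrank_ker φ
  have hr3 : Module.finrank ℂ ((Wd P j n).comap (Vsp d n).subtype) ≤
      Module.finrank ℂ (LinearMap.ker φ) := Submodule.finrank_mono hker
  have hr4 : Module.finrank ℂ ((Vsp d n) ⧸ ((Wd P j n).comap (Vsp d n).subtype)) +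
      Module.finrank ℂ ((Wd P j n).comap (Vsp d n).subtype) = Module.finrank ℂ (Vsp d n) :=
    Submodule.finrank_quotient_add_finrank _
  have g1 : hdim P j (n+1) = Module.finrank ℂ (V ⧸ A) := rfl
  have g2 : hdim P (j+1) (n+1) = Module.finrank ℂ (V ⧸ B) := rfl
  have g3 : hdim P j n = Module.finrank ℂ ((Vsp d n) ⧸ ((Wd P j n).comap (Vsp d n).subtype)) := rfl
  rw [g1, g2, g3]
  omega

end AuxPoly
namespace AuxPoly

variable {d : ℕ} {P : ℕ → MvPolynomial (Fin d ⊕ Fin d) ℂ}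

lemma hdim_telescope (hP : ∀ i, P i ∈ Vsp d 1) (j n : ℕ) :
    hdim P j n ≤ ∑ k ∈ Finset.range (n+1), hdim P (j+1) k := by
  induction n with
  | zero =>
    rw [show (0+1) = 1 from rfl, Finset.sum_range_one, hdim_zero_right, hdim_zero_right]
  | succ n ih =>
    calc hdim P j (n+1) ≤ hdim P (j+1) (n+1) + hdim P j n := hdim_le hP j n
    _ ≤ hdim P (j+1) (n+1) + ∑ k ∈ Finset.range (n+1), hdim P (j+1) k := by omega
    _ ≤ ∑ k ∈ Finset.range (n+2), hdim P (j+1) k := by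
        conv_rhs => rw [Finset.sum_range_succ]
        omega

lemma hdim_chain (hP : ∀ i, P i ∈ Vsp d 1) (m N0 : ℕ) (hm : 1 ≤ m)
    (hvan : ∀ n, N0 ≤ n → hdim P m n = 0) :
    ∃ C, ∀ n, hdim P 0 n ≤ C * (n+1)^(m-1) := by
  set C := ∑ k ∈ Finset.range N0, hdim P m k with hC
  have hsum : ∀ n, ∑ k ∈ Finset.range (n+1), hdim P m k ≤ C := by
    intro n
    have h1 : ∑ k ∈ Finset.range (n+1), hdim P m k
        ≤ ∑ k ∈ Finset.range (N0 + n + 1), hdim P m k :=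
      Finset.sum_le_sum_of_subset (Finset.range_subset_range.2 (by omega))
    have h2 : ∑ k ∈ Finset.range (N0 + n + 1), hdim P m k = C := by
      rw [hC]
      symm
      apply Finset.sum_subset (Finset.range_subset_range.2 (by omega))
      intro x _ hx
      simp only [Finset.mem_range] at hx
      exact hvan x (by omega)
    omega
  have key : ∀ i, i < m → ∀ n, hdim P (m-1-i) n ≤ C * (n+1)^i := by
    intro i
    induction i with
    | zero =>
      intro _ n
      have := hdim_telescope hP (m-1) n
      have hm1 : m - 1 + 1 = m := by omega
      rw [hm1] at this
      simpa using le_trans this (hsum n)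
    | succ i ih =>
      intro hi n
      have h1 : hdim P (m-1-(i+1)) n ≤ ∑ k ∈ Finset.range (n+1), hdim P (m-1-i) k := by
        have heq : m - 1 - (i+1) + 1 = m - 1 - i := by omega
        rw [← heq]
        exact hdim_telescope hP (m-1-(i+1)) n
      have h2 : ∑ k ∈ Finset.range (n+1), hdim P (m-1-i) k
          ≤ ∑ k ∈ Finset.range (n+1), C * (k+1)^i :=
        Finset.sum_le_sum (fun k _ => ih (by omega) k)
      have h3 : ∑ k ∈ Finset.range (n+1), C * (k+1)^i ≤ (n+1) * (C * (n+1)^i) := by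
        calc ∑ k ∈ Finset.range (n+1), C * (k+1)^i
            ≤ ∑ _k ∈ Finset.range (n+1), C * (n+1)^i := by
              apply Finset.sum_le_sum
              intro k hk
              simp only [Finset.mem_range] at hk
              exact Nat.mul_le_mul_left C (Nat.pow_le_pow_left (by omega) i)
          _ = (n+1) * (C * (n+1)^i) := by
              rw [Finset.sum_const, Finset.card_range, smul_eq_mul]
      calc hdim P (m-1-(i+1)) n ≤ (n+1) * (C * (n+1)^i) := by omega
        _ = C * (n+1)^(i+1) := by ring
  refine ⟨C, fun n => ?_⟩
  have := key (m-1) (by omega) n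
  have h0 : m - 1 - (m-1) = 0 := by omega
  rw [h0] at this
  exact this

/-- lower bound on the dimension of the bidegree (n,n) part -/
lemma finrank_Vsp_lb (hd : 2 ≤ d) (q : ℕ) :
    (q+1)^(2*(d-1)) ≤ Module.finrank ℂ (Vsp d (q*(d-1))) := by
  classical
  set n := q * (d-1) with hn
  set last : Fin d := ⟨d-1, by omega⟩ with hlast
  set emb : Fin (d-1) → Fin d := fun t => ⟨t.1, by omega⟩ with hemb
  have hembne : ∀ t, emb t ≠ last := by
    intro t h
    have := congrArg Fin.val h
    simp only [hemb, hlast] at this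
    omega
  have hembinj : Function.Injective emb := by
    intro s t h
    apply Fin.ext
    simpa [hemb] using congrArg Fin.val h
  -- the exponent finsupps
  set μx : (Fin (d-1) → Fin (q+1)) → ((Fin d ⊕ Fin d) →₀ ℕ) := fun a =>
    (∑ t, Finsupp.single (Sum.inl (emb t)) ((a t : ℕ))) +
      Finsupp.single (Sum.inl last) (n - ∑ t, (a t : ℕ)) with hμx
  set μy : (Fin (d-1) → Fin (q+1)) → ((Fin d ⊕ Fin d) →₀ ℕ) := fun b =>
    (∑ t, Finsupp.single (Sum.inr (emb t)) ((b t : ℕ))) +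
      Finsupp.single (Sum.inr last) (n - ∑ t, (b t : ℕ)) with hμy
  have hsumle : ∀ a : Fin (d-1) → Fin (q+1), ∑ t, (a t : ℕ) ≤ n := by
    intro a
    calc ∑ t, (a t : ℕ) ≤ ∑ _t : Fin (d-1), q :=
          Finset.sum_le_sum (fun t _ => by omega)
      _ = (d-1) * q := by rw [Finset.sum_const, Finset.card_univ, Fintype.card_fin, smul_eq_mul]
      _ = n := by rw [hn, Nat.mul_comm]
  -- weight of a single
  have wsingle : ∀ (w : (Fin d ⊕ Fin d) → ℕ) (i : Fin d ⊕ Fin d) (k : ℕ),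
      Finsupp.weight w (Finsupp.single i k) = k * w i := by
    intro w i k
    rw [Finsupp.weight_apply, Finsupp.sum_single_index] <;> simp
  have hwx : ∀ a, Finsupp.weight (wA d) (μx a) = n ∧ Finsupp.weight (wB d) (μx a) = 0 := by
    intro a
    constructor
    · rw [hμx]
      simp only [map_add, map_sum, wsingle]
      have : ∀ t : Fin (d-1), (a t : ℕ) * wA d (Sum.inl (emb t)) = (a t : ℕ) := by
        intro t; simp [wA]
      rw [Finset.sum_congr rfl (fun t _ => this t)]
      have : wA d (Sum.inl last) = 1 := rfl
      rw [this, mul_one]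
      have := hsumle a
      omega
    · rw [hμx]
      simp only [map_add, map_sum, wsingle]
      have : ∀ t : Fin (d-1), (a t : ℕ) * wB d (Sum.inl (emb t)) = 0 := by
        intro t; simp [wB]
      rw [Finset.sum_congr rfl (fun t _ => this t)]
      simp [wB]
  have hwy : ∀ b, Finsupp.weight (wB d) (μy b) = n ∧ Finsupp.weight (wA d) (μy b) = 0 := by
    intro b
    constructor
    · rw [hμy]
      simp only [map_add, map_sum, wsingle]
      have : ∀ t : Fin (d-1), (b t : ℕ) * wB d (Sum.inr (emb t)) = (b t : ℕ) := by
        intro t; simp [wB]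
      rw [Finset.sum_congr rfl (fun t _ => this t)]
      have : wB d (Sum.inr last) = 1 := rfl
      rw [this, mul_one]
      have := hsumle b
      omega
    · rw [hμy]
      simp only [map_add, map_sum, wsingle]
      have : ∀ t : Fin (d-1), (b t : ℕ) * wA d (Sum.inr (emb t)) = 0 := by
        intro t; simp [wA]
      rw [Finset.sum_congr rfl (fun t _ => this t)]
      simp [wA]
  -- the full exponents
  set μp : ((Fin (d-1) → Fin (q+1)) × (Fin (d-1) → Fin (q+1))) → ((Fin d ⊕ Fin d) →₀ ℕ) :=
    fun z => μx z.1 + μy z.2 with hμp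
  -- coordinate recovery
  have hvalx : ∀ a b t, μp (a, b) (Sum.inl (emb t)) = (a t : ℕ) := by
    intro a b t
    rw [hμp]
    simp only [Finsupp.add_apply, hμx, hμy]
    have h1 : (∑ t', Finsupp.single (Sum.inl (emb t') : Fin d ⊕ Fin d) ((a t' : ℕ))) (Sum.inl (emb t))
        = (a t : ℕ) := by
      rw [Finsupp.finset_sum_apply]
      rw [Finset.sum_eq_single t]
      · simp
      · intro t' _ ht'
        rw [Finsupp.single_apply, if_neg]
        intro hcon
        exact ht' (hembinj (Sum.inl_injective hcon))
      · intro h; exact absurd (Finset.mem_univ t) h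
    have h2 : Finsupp.single (Sum.inl last : Fin d ⊕ Fin d) (n - ∑ t', (a t' : ℕ)) (Sum.inl (emb t)) = 0 := by
      rw [Finsupp.single_apply, if_neg]
      intro hcon
      exact hembne t (Sum.inl_injective hcon).symm
    have h3 : (∑ t', Finsupp.single (Sum.inr (emb t') : Fin d ⊕ Fin d) ((b t' : ℕ))) (Sum.inl (emb t)) = 0 := by
      rw [Finsupp.finset_sum_apply]
      apply Finset.sum_eq_zero
      intro t' _
      rw [Finsupp.single_apply, if_neg]
      exact fun hcon => (Sum.inr_ne_inl hcon)
    have h4 : Finsupp.single (Sum.inr last : Fin d ⊕ Fin d) (n - ∑ t', (b t' : ℕ)) (Sum.inl (emb t)) = 0 := by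
      rw [Finsupp.single_apply, if_neg]
      exact fun hcon => (Sum.inr_ne_inl hcon)
    simp only [Finsupp.add_apply, h1, h2, h3, h4]
    omega
  have hvaly : ∀ a b t, μp (a, b) (Sum.inr (emb t)) = (b t : ℕ) := by
    intro a b t
    rw [hμp]
    simp only [Finsupp.add_apply, hμx, hμy]
    have h1 : (∑ t', Finsupp.single (Sum.inr (emb t') : Fin d ⊕ Fin d) ((b t' : ℕ))) (Sum.inr (emb t))
        = (b t : ℕ) := by
      rw [Finsupp.finset_sum_apply]
      rw [Finset.sum_eq_single t]
      · simp
      · intro t' _ ht'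
        rw [Finsupp.single_apply, if_neg]
        intro hcon
        exact ht' (hembinj (Sum.inr_injective hcon))
      · intro h; exact absurd (Finset.mem_univ t) h
    have h2 : Finsupp.single (Sum.inr last : Fin d ⊕ Fin d) (n - ∑ t', (b t' : ℕ)) (Sum.inr (emb t)) = 0 := by
      rw [Finsupp.single_apply, if_neg]
      intro hcon
      exact hembne t (Sum.inr_injective hcon).symm
    have h3 : (∑ t', Finsupp.single (Sum.inl (emb t') : Fin d ⊕ Fin d) ((a t' : ℕ))) (Sum.inr (emb t)) = 0 := by
      rw [Finsupp.finset_sum_apply]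
      apply Finset.sum_eq_zero
      intro t' _
      rw [Finsupp.single_apply, if_neg]
      exact fun hcon => (Sum.inl_ne_inr hcon)
    have h4 : Finsupp.single (Sum.inl last : Fin d ⊕ Fin d) (n - ∑ t', (a t' : ℕ)) (Sum.inr (emb t)) = 0 := by
      rw [Finsupp.single_apply, if_neg]
      exact fun hcon => (Sum.inl_ne_inr hcon)
    simp only [Finsupp.add_apply, h1, h2, h3, h4]
    omega
  have hμpinj : Function.Injective μp := by
    rintro ⟨a, b⟩ ⟨a', b'⟩ h
    have hax : ∀ t, (a t : ℕ) = (a' t : ℕ) := by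
      intro t
      rw [← hvalx a b t, ← hvalx a' b' t, h]
    have hbx : ∀ t, (b t : ℕ) = (b' t : ℕ) := by
      intro t
      rw [← hvaly a b t, ← hvaly a' b' t, h]
    have : a = a' := funext (fun t => Fin.ext (hax t))
    have : b = b' := funext (fun t => Fin.ext (hbx t))
    simp_all
  -- the linearly independent family of monomials
  have hmem : ∀ z, (monomial (μp z) (1:ℂ) : MvPolynomial (Fin d ⊕ Fin d) ℂ) ∈ Vsp d n := by
    rintro ⟨a, b⟩
    constructor
    · apply isWeightedHomogeneous_monomial
      rw [hμp, map_add, (hwx a).1, (hwy b).2, add_zero]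
    · apply isWeightedHomogeneous_monomial
      rw [hμp, map_add, (hwx a).2, (hwy b).1, zero_add]
  set F : ((Fin (d-1) → Fin (q+1)) × (Fin (d-1) → Fin (q+1))) → Vsp d n :=
    fun z => ⟨monomial (μp z) (1:ℂ), hmem z⟩ with hF
  have hFind : LinearIndependent ℂ F := by
    apply LinearIndependent.of_comp (Vsp d n).subtype
    have : (Vsp d n).subtype ∘ F =
        (fun μ => (monomial μ (1:ℂ) : MvPolynomial (Fin d ⊕ Fin d) ℂ)) ∘ μp := rfl
    rw [this]
    have hbase : LinearIndependent ℂ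
        (fun μ : (Fin d ⊕ Fin d) →₀ ℕ => (monomial μ (1:ℂ) : MvPolynomial (Fin d ⊕ Fin d) ℂ)) := by
      have := (basisMonomials (Fin d ⊕ Fin d) ℂ).linearIndependent
      simpa [coe_basisMonomials] using this
    exact hbase.comp μp hμpinj
  have hcard := hFind.fintype_card_le_finrank
  have hcardeq : Fintype.card ((Fin (d-1) → Fin (q+1)) × (Fin (d-1) → Fin (q+1)))
      = (q+1)^(2*(d-1)) := by
    rw [Fintype.card_prod, Fintype.card_fun]
    simp only [Fintype.card_fin]
    rw [← pow_add]
    congr 1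
    omega
  rw [hcardeq] at hcard
  exact hcard

end AuxPoly
namespace AuxPoly

variable {d : ℕ}

lemma whc_mul {w : (Fin d ⊕ Fin d) → ℕ} {q : MvPolynomial (Fin d ⊕ Fin d) ℂ}
    (hq : IsWeightedHomogeneous w q 1) (n : ℕ) (c : MvPolynomial (Fin d ⊕ Fin d) ℂ) :
    weightedHomogeneousComponent w (n+1) (q * c) = q * weightedHomogeneousComponent w n c := by
  classical
  ext μ
  rw [coeff_weightedHomogeneousComponent, coeff_mul, coeff_mul]
  by_cases hμ : Finsupp.weight w μ = n + 1
  · rw [if_pos hμ]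
    apply Finset.sum_congr rfl
    rintro ⟨μ1, μ2⟩ hmem
    simp only
    by_cases hq0 : coeff μ1 q = 0
    · rw [hq0, zero_mul, zero_mul]
    · rw [coeff_weightedHomogeneousComponent, if_pos]
      have hadd : μ1 + μ2 = μ := Finset.HasAntidiagonal.mem_antidiagonal.1 hmem
      have h1 : Finsupp.weight w μ1 = 1 := hq hq0
      have : Finsupp.weight w μ1 + Finsupp.weight w μ2 = n + 1 := by
        rw [← map_add, hadd, hμ]
      omega
  · rw [if_neg hμ]
    symm
    apply Finset.sum_eq_zero
    rintro ⟨μ1, μ2⟩ hmem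
    simp only
    by_cases hq0 : coeff μ1 q = 0
    · rw [hq0, zero_mul]
    · rw [coeff_weightedHomogeneousComponent, if_neg, mul_zero]
      intro hw2
      have hadd : μ1 + μ2 = μ := Finset.HasAntidiagonal.mem_antidiagonal.1 hmem
      have h1 : Finsupp.weight w μ1 = 1 := hq hq0
      apply hμ
      rw [← hadd, map_add, h1, hw2, add_comm]

lemma isWH_whc {w w' : (Fin d ⊕ Fin d) → ℕ} {f : MvPolynomial (Fin d ⊕ Fin d) ℂ} {k n : ℕ}
    (hf : IsWeightedHomogeneous w f k) :
    IsWeightedHomogeneous w (weightedHomogeneousComponent w' n f) k := by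
  classical
  intro μ hμ
  rw [coeff_weightedHomogeneousComponent] at hμ
  by_cases h : Finsupp.weight w' μ = n
  · rw [if_pos h] at hμ
    exact hf hμ
  · rw [if_neg h] at hμ
    exact absurd rfl hμ

lemma ideal_graded_mem {m : ℕ} (p : Fin m → MvPolynomial (Fin d ⊕ Fin d) ℂ)
    (hp : ∀ i, p i ∈ Vsp d 1) {f : MvPolynomial (Fin d ⊕ Fin d) ℂ} {n : ℕ}
    (hfI : f ∈ Ideal.span (Set.range p)) (hfV : f ∈ Vsp d (n+1)) :
    f ∈ Wd (fun j => if h : j < m then p ⟨j, h⟩ else 0) m (n+1) := by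
  classical
  set P : ℕ → MvPolynomial (Fin d ⊕ Fin d) ℂ :=
    fun j => if h : j < m then p ⟨j, h⟩ else 0 with hPdef
  obtain ⟨c, hc⟩ := Ideal.mem_span_range_iff_exists_fun.1 hfI
  have hf1 : weightedHomogeneousComponent (wA d) (n+1) f = f :=
    hfV.1.weightedHomogeneousComponent_same
  have hf2 : weightedHomogeneousComponent (wB d) (n+1) f = f :=
    hfV.2.weightedHomogeneousComponent_same
  have key : f = ∑ i, p i * (weightedHomogeneousComponent (wB d) n
      (weightedHomogeneousComponent (wA d) n (c i))) := by
    calc f = weightedHomogeneousComponent (wB d) (n+1)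
          (weightedHomogeneousComponent (wA d) (n+1) f) := by rw [hf1, hf2]
      _ = weightedHomogeneousComponent (wB d) (n+1)
          (weightedHomogeneousComponent (wA d) (n+1) (∑ i, c i * p i)) := by rw [hc]
      _ = weightedHomogeneousComponent (wB d) (n+1)
          (∑ i, p i * weightedHomogeneousComponent (wA d) n (c i)) := by
            rw [map_sum]
            congr 1
            apply Finset.sum_congr rfl
            intro i _
            rw [mul_comm, whc_mul (hp i).1]
      _ = ∑ i, weightedHomogeneousComponent (wB d) (n+1)
          (p i * weightedHomogeneousComponent (wA d) n (c i)) := by rw [map_sum]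
      _ = ∑ i, p i * (weightedHomogeneousComponent (wB d) n
          (weightedHomogeneousComponent (wA d) n (c i))) := by
            apply Finset.sum_congr rfl
            intro i _
            rw [whc_mul (hp i).2]
  rw [key]
  apply Submodule.sum_mem
  intro i _
  set g := weightedHomogeneousComponent (wB d) n (weightedHomogeneousComponent (wA d) n (c i))
    with hg
  have hgV : g ∈ Vsp d n := by
    constructor
    · exact isWH_whc (weightedHomogeneousComponent_isWeightedHomogeneous n _)
    · exact weightedHomogeneousComponent_isWeightedHomogeneous n _
  have hPi : P (i : ℕ) = p i := by
    rw [hPdef]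
    simp [i.isLt]
  have : p i * g = (LinearMap.mulLeft ℂ (P (i : ℕ))) g := by
    rw [hPi, LinearMap.mulLeft_apply]
  rw [this]
  exact map_mul_le_Wd (i : ℕ) m n i.isLt (Submodule.mem_map_of_mem hgV)

end AuxPoly
namespace AuxPoly

/-- weight of wA is the sum of the x-exponents -/
lemma weightA_eq {d : ℕ} (μ : (Fin d ⊕ Fin d) →₀ ℕ) :
    Finsupp.weight (wA d) μ = ∑ a : Fin d, μ (Sum.inl a) := by
  rw [Finsupp.weight_apply, Finsupp.sum_fintype _ _ (by intro i; simp)]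
  rw [Fintype.sum_sum_type]
  have h1 : ∀ a : Fin d, μ (Sum.inl a) • wA d (Sum.inl a) = μ (Sum.inl a) := by
    intro a; simp [wA]
  have h2 : ∀ a : Fin d, μ (Sum.inr a) • wA d (Sum.inr a) = 0 := by
    intro a; simp [wA]
  rw [Finset.sum_congr rfl (fun a _ => h1 a), Finset.sum_congr rfl (fun a _ => h2 a)]
  simp

lemma weightB_eq {d : ℕ} (μ : (Fin d ⊕ Fin d) →₀ ℕ) :
    Finsupp.weight (wB d) μ = ∑ b : Fin d, μ (Sum.inr b) := by
  rw [Finsupp.weight_apply, Finsupp.sum_fintype _ _ (by intro i; simp)]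
  rw [Fintype.sum_sum_type]
  have h1 : ∀ a : Fin d, μ (Sum.inl a) • wB d (Sum.inl a) = 0 := by
    intro a; simp [wB]
  have h2 : ∀ a : Fin d, μ (Sum.inr a) • wB d (Sum.inr a) = μ (Sum.inr a) := by
    intro a; simp [wB]
  rw [Finset.sum_congr rfl (fun a _ => h1 a), Finset.sum_congr rfl (fun a _ => h2 a)]
  simp

/-- **Main algebraic lemma**: a system of `m ≤ 2d-2` bilinear forms on `ℂ^d × ℂ^d`
has a common zero with both parts nonzero. -/
theorem bilinear_system_zero {d m : ℕ} (hd : 2 ≤ d) (hm : 1 ≤ m) (hmd : m + 1 < 2*d)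
    (p : Fin m → MvPolynomial (Fin d ⊕ Fin d) ℂ) (hp : ∀ i, p i ∈ Vsp d 1) :
    ∃ x y : Fin d → ℂ, x ≠ 0 ∧ y ≠ 0 ∧ ∀ i, eval (Sum.elim x y) (p i) = 0 := by
  classical
  by_contra hcon
  push_neg at hcon
  set I : Ideal (MvPolynomial (Fin d ⊕ Fin d) ℂ) := Ideal.span (Set.range p) with hI
  -- every product variable is in the radical
  have hrad : ∀ a b : Fin d, (X (Sum.inl a) * X (Sum.inr b) : MvPolynomial (Fin d ⊕ Fin d) ℂ)
      ∈ I.radical := by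
    intro a b
    rw [← vanishingIdeal_zeroLocus_eq_radical (K := ℂ)]
    rw [mem_vanishingIdeal_iff]
    intro z hz
    have hzelim : Sum.elim (z ∘ Sum.inl) (z ∘ Sum.inr) = z := by
      funext t; cases t <;> rfl
    have heval : ∀ i, eval (Sum.elim (z ∘ Sum.inl) (z ∘ Sum.inr)) (p i) = 0 := by
      intro i
      rw [hzelim]
      exact hz (p i) (Ideal.subset_span ⟨i, rfl⟩)
    have hzero : z ∘ Sum.inl = 0 ∨ z ∘ Sum.inr = 0 := by
      by_contra hne
      push_neg at hne
      obtain ⟨i, hi⟩ := hcon (z ∘ Sum.inl) (z ∘ Sum.inr) hne.1 hne.2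
      exact hi (heval i)
    simp only [map_mul, aeval_X]
    rcases hzero with h | h
    · have : z (Sum.inl a) = 0 := congrFun h a
      rw [this, zero_mul]
    · have : z (Sum.inr b) = 0 := congrFun h b
      rw [this, mul_zero]
  -- uniform exponent
  have hradpow : ∀ ab : Fin d × Fin d, ∃ k : ℕ,
      (X (Sum.inl ab.1) * X (Sum.inr ab.2) : MvPolynomial (Fin d ⊕ Fin d) ℂ) ^ k ∈ I := by
    intro ab
    exact hrad ab.1 ab.2
  choose K hK using hradpow
  set M : ℕ := (Finset.univ.sup K) + 1 with hM
  have hM1 : 1 ≤ M := by omega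
  have hMK : ∀ ab : Fin d × Fin d, K ab ≤ M := by
    intro ab
    have := Finset.le_sup (Finset.mem_univ ab) (f := K)
    omega
  have hpow : ∀ a b : Fin d,
      (X (Sum.inl a) * X (Sum.inr b) : MvPolynomial (Fin d ⊕ Fin d) ℂ) ^ M ∈ I := by
    intro a b
    have h1 := hK (a, b)
    have h2 : M = (M - K (a,b)) + K (a,b) := by have := hMK (a,b); omega
    rw [h2, pow_add]
    exact Ideal.mul_mem_left _ _ h1
  -- the tuple P
  set P : ℕ → MvPolynomial (Fin d ⊕ Fin d) ℂ :=
    fun j => if h : j < m then p ⟨j, h⟩ else 0 with hPdef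
  have hP : ∀ j, P j ∈ Vsp d 1 := by
    intro j
    rw [hPdef]
    by_cases h : j < m
    · simpa [h] using hp ⟨j, h⟩
    · simp [h]
  -- coverage: for n ≥ d*M the whole graded piece is in Wd
  have hcover : ∀ n : ℕ, d * M ≤ n → Vsp d n ≤ Wd P m n := by
    intro n hn f hf
    have hf' := hf
    rw [show f = ∑ μ ∈ f.support, monomial μ (coeff μ f) from f.as_sum]
    apply Submodule.sum_mem
    intro μ hμ
    have hwa : Finsupp.weight (wA d) μ = n := hf.1 (by simpa using hμ)
    have hwb : Finsupp.weight (wB d) μ = n := hf.2 (by simpa using hμ)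
    -- pigeonhole
    have ha : ∃ a : Fin d, M ≤ μ (Sum.inl a) := by
      by_contra hcon2
      push_neg at hcon2
      have : ∑ a : Fin d, μ (Sum.inl a) ≤ ∑ _a : Fin d, (M-1) :=
        Finset.sum_le_sum (fun a _ => by have := hcon2 a; omega)
      rw [Finset.sum_const, Finset.card_univ, Fintype.card_fin, smul_eq_mul] at this
      rw [weightA_eq] at hwa
      have hdM : d * (M-1) + d = d * M := by
        have hM' : M - 1 + 1 = M := by omega
        calc d*(M-1) + d = d*((M-1)+1) := by ring
          _ = d*M := by rw [hM']
      omega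
    have hb : ∃ b : Fin d, M ≤ μ (Sum.inr b) := by
      by_contra hcon2
      push_neg at hcon2
      have : ∑ b : Fin d, μ (Sum.inr b) ≤ ∑ _b : Fin d, (M-1) :=
        Finset.sum_le_sum (fun b _ => by have := hcon2 b; omega)
      rw [Finset.sum_const, Finset.card_univ, Fintype.card_fin, smul_eq_mul] at this
      rw [weightB_eq] at hwb
      have hdM : d * (M-1) + d = d * M := by
        have hM' : M - 1 + 1 = M := by omega
        calc d*(M-1) + d = d*((M-1)+1) := by ring
          _ = d*M := by rw [hM']
      omega
    obtain ⟨a, haM⟩ := ha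
    obtain ⟨b, hbM⟩ := hb
    -- decompose the monomial
    set g : (Fin d ⊕ Fin d) →₀ ℕ :=
      M • (Finsupp.single (Sum.inl a) 1 + Finsupp.single (Sum.inr b) 1) with hg
    have hgle : g ≤ μ := by
      rw [Finsupp.le_def]
      intro t
      rw [hg]
      simp only [Finsupp.smul_apply, Finsupp.add_apply, smul_eq_mul]
      rcases t with t | t
      · by_cases ht : a = t
        · subst ht
          simp only [Finsupp.single_apply, reduceIte]
          simp only [show (Sum.inr b : Fin d ⊕ Fin d) ≠ Sum.inl a from fun h => Sum.inr_ne_inl h,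
            if_false, if_true, if_neg, add_zero, mul_one]
          omega
        · have h1 : (Sum.inl a : Fin d ⊕ Fin d) ≠ Sum.inl t := fun h => ht (Sum.inl_injective h)
          have h2 : (Sum.inr b : Fin d ⊕ Fin d) ≠ Sum.inl t := fun h => Sum.inr_ne_inl h
          simp only [Finsupp.single_apply, if_neg h1, if_neg h2, add_zero, mul_zero]
          omega
      · by_cases ht : b = t
        · subst ht
          simp only [Finsupp.single_apply, reduceIte]
          simp only [show (Sum.inl a : Fin d ⊕ Fin d) ≠ Sum.inr b from fun h => Sum.inl_ne_inr h,
            if_false, if_true, if_neg, zero_add, mul_one]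
          omega
        · have h1 : (Sum.inl a : Fin d ⊕ Fin d) ≠ Sum.inr t := fun h => Sum.inl_ne_inr h
          have h2 : (Sum.inr b : Fin d ⊕ Fin d) ≠ Sum.inr t := fun h => ht (Sum.inr_injective h)
          simp only [Finsupp.single_apply, if_neg h1, if_neg h2, add_zero, mul_zero]
          omega
    have hμdecomp : μ = g + (μ - g) := (add_tsub_cancel_of_le hgle).symm
    have hXpow : (X (Sum.inl a) * X (Sum.inr b) : MvPolynomial (Fin d ⊕ Fin d) ℂ) ^ M
        = monomial g (1 : ℂ) := by
      rw [X, X, monomial_mul, monomial_pow, hg]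
      norm_num
    have hmono : (monomial μ (1:ℂ) : MvPolynomial (Fin d ⊕ Fin d) ℂ) ∈ I := by
      have : (monomial μ (1:ℂ) : MvPolynomial (Fin d ⊕ Fin d) ℂ)
          = (X (Sum.inl a) * X (Sum.inr b)) ^ M * monomial (μ - g) 1 := by
        rw [hXpow, monomial_mul, one_mul, ← hμdecomp]
      rw [this]
      exact Ideal.mul_mem_right _ _ (hpow a b)
    have hmonoV : (monomial μ (1:ℂ) : MvPolynomial (Fin d ⊕ Fin d) ℂ) ∈ Vsp d n :=
      ⟨isWeightedHomogeneous_monomial _ _ _ hwa, isWeightedHomogeneous_monomial _ _ _ hwb⟩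
    -- apply the graded membership lemma
    have hn1 : ∃ n', n = n' + 1 := by
      refine ⟨n - 1, ?_⟩
      have hdm1 : 1 ≤ d * M := Nat.mul_pos (by omega) (by omega)
      omega
    obtain ⟨n', rfl⟩ := hn1
    have hmonoW : (monomial μ (1:ℂ) : MvPolynomial (Fin d ⊕ Fin d) ℂ) ∈ Wd P m (n'+1) :=
      ideal_graded_mem p hp hmono hmonoV
    have : (monomial μ (coeff μ f) : MvPolynomial (Fin d ⊕ Fin d) ℂ)
        = (coeff μ f) • monomial μ (1:ℂ) := by
      rw [smul_monomial, smul_eq_mul, mul_one]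
    rw [this]
    exact Submodule.smul_mem _ _ hmonoW
  -- vanishing of the top quotient
  have hvan : ∀ n : ℕ, d * M ≤ n → hdim P m n = 0 := by
    intro n hn
    have htop : (Wd P m n).comap (Vsp d n).subtype = ⊤ := by
      rw [eq_top_iff]
      rintro ⟨v, hv⟩ _
      exact hcover n hn hv
    unfold hdim
    rw [htop]
    have h1 := Submodule.finrank_quotient_add_finrank
      ((⊤ : Submodule ℂ (Vsp d n)))
    have h2 : Module.finrank ℂ ((⊤ : Submodule ℂ (Vsp d n))) = Module.finrank ℂ (Vsp d n) :=
      finrank_top ℂ _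
    have h3 : Module.finrank ℂ ((Vsp d n) ⧸ (⊤ : Submodule ℂ (Vsp d n))) +
        Module.finrank ℂ ((⊤ : Submodule ℂ (Vsp d n))) = Module.finrank ℂ (Vsp d n) := h1
    omega
  -- the dimension chain
  obtain ⟨C, hC⟩ := hdim_chain hP m (d*M) hm (fun n hn => hvan n hn)
  -- h 0 is the full dimension
  have h0eq : ∀ n, hdim P 0 n = Module.finrank ℂ (Vsp d n) := by
    intro n
    unfold hdim
    have hbot : Wd P 0 n = ⊥ := by cases n <;> rfl
    rw [hbot]
    have hcomap : (⊥ : Submodule ℂ (MvPolynomial (Fin d ⊕ Fin d) ℂ)).comap (Vsp d n).subtype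
        = ⊥ := by
      simp [Submodule.eq_bot_iff, Submodule.mem_comap]
    rw [hcomap]
    exact (Submodule.quotEquivOfEqBot _ rfl).finrank_eq
  -- final counting contradiction
  set q : ℕ := C * (d-1)^(m-1) with hq
  set n : ℕ := q * (d-1) with hn
  have hlow : (q+1)^(2*(d-1)) ≤ Module.finrank ℂ (Vsp d n) := finrank_Vsp_lb hd q
  have hup : Module.finrank ℂ (Vsp d n) ≤ C * (n+1)^(m-1) := by
    rw [← h0eq]; exact hC n
  have hn1 : n + 1 ≤ (q+1)*(d-1) := by
    have : 1 ≤ d - 1 := by omega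
    calc n + 1 = q * (d-1) + 1 := rfl
      _ ≤ q * (d-1) + (d-1) := by omega
      _ = (q+1)*(d-1) := by ring
  have hup2 : C * (n+1)^(m-1) ≤ q * (q+1)^(m-1) := by
    calc C * (n+1)^(m-1) ≤ C * ((q+1)*(d-1))^(m-1) :=
          Nat.mul_le_mul_left C (Nat.pow_le_pow_left hn1 _)
      _ = C * ((d-1)^(m-1) * (q+1)^(m-1)) := by rw [mul_pow]; ring
      _ = q * (q+1)^(m-1) := by rw [hq]; ring
  have hmle : m ≤ 2*(d-1) := by omega
  have hml : (q+1)^m ≤ (q+1)^(2*(d-1)) := Nat.pow_le_pow_right (by omega) hmle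
  have hmm : (q+1)^m = (q+1) * (q+1)^(m-1) := by
    conv_lhs => rw [show m = 1 + (m-1) from by omega]
    rw [pow_add, pow_one]
  have hpos : 0 < (q+1)^(m-1) := Nat.pow_pos (by omega)
  have hfinal : (q+1) * (q+1)^(m-1) ≤ q * (q+1)^(m-1) := by
    rw [← hmm]
    calc (q+1)^m ≤ (q+1)^(2*(d-1)) := hml
      _ ≤ Module.finrank ℂ (Vsp d n) := hlow
      _ ≤ C * (n+1)^(m-1) := hup
      _ ≤ q * (q+1)^(m-1) := hup2
  have := Nat.le_of_mul_le_mul_right hfinal hpos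
  omega

end AuxPoly
section MatrixAux

lemma trace_outer_outer {d' : ℕ} (u v w z : Fin d' → ℂ) :
    ((vecMulVec u v) * (vecMulVec w z)).trace = (v ⬝ᵥ w) * (z ⬝ᵥ u) := by
  simp only [Matrix.trace, Matrix.diag, Matrix.mul_apply, vecMulVec_apply, dotProduct]
  rw [Finset.sum_comm, Finset.sum_mul]
  apply Finset.sum_congr rfl
  intro b _
  rw [Finset.mul_sum]
  apply Finset.sum_congr rfl
  intro a _
  ring

lemma conj_outer {d d' : ℕ} (A : Matrix (Fin d') (Fin d) ℂ) (ψ : Fin d → ℂ) :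
    A * vecMulVec ψ (star ψ) * Aᴴ = vecMulVec (A *ᵥ ψ) (star (A *ᵥ ψ)) := by
  ext a b
  simp only [Matrix.mul_apply, Matrix.vecMulVec_apply, Matrix.conjTranspose_apply,
    Matrix.mulVec, dotProduct, Pi.star_apply, star_sum, Finset.sum_mul, Finset.mul_sum]
  apply Finset.sum_congr rfl
  intro j _
  apply Finset.sum_congr rfl
  intro k _
  simp only [star_mul']
  ring

lemma inner_transfer {d d' : ℕ} (A B : Matrix (Fin d') (Fin d) ℂ) (ψ φ : Fin d → ℂ) :
    star (A *ᵥ ψ) ⬝ᵥ (B *ᵥ φ) = star ψ ⬝ᵥ ((Aᴴ * B) *ᵥ φ) := by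
  rw [Matrix.star_mulVec, ← Matrix.dotProduct_mulVec, Matrix.mulVec_mulVec]

end MatrixAux
/-- The quantum channel associated with a Kraus family: `ρ ↦ ∑ k, E k * ρ * (E k)ᴴ`. -/
noncomputable def channelApply {n d d' : ℕ} (E : Fin n → Matrix (Fin d') (Fin d) ℂ)
    (ρ : Matrix (Fin d) (Fin d) ℂ) : Matrix (Fin d') (Fin d') ℂ :=
  ∑ k, E k * ρ * (E k)ᴴ

lemma trace_zero_of_orth {n d d' : ℕ} (E : Fin n → Matrix (Fin d') (Fin d) ℂ)
    (ψ φ : Fin d → ℂ) (h : ∀ j k : Fin n, star ψ ⬝ᵥ (((E j)ᴴ * E k) *ᵥ φ) = 0) :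
    (channelApply E (vecMulVec ψ (star ψ)) *
      channelApply E (vecMulVec φ (star φ))).trace = 0 := by
  unfold channelApply
  rw [Finset.sum_mul]
  rw [Matrix.trace_sum]
  apply Finset.sum_eq_zero
  intro j _
  rw [Finset.mul_sum, Matrix.trace_sum]
  apply Finset.sum_eq_zero
  intro k _
  rw [conj_outer, conj_outer, trace_outer_outer, inner_transfer, h j k, zero_mul]

/-- a quantum channel with `n` Kraus operators on `ℂ^d` and `n² < 2d − 1`
always has `α(E) > 1`: some two unit input vectors have orthogonal outputs. -/
theorem stmt_10 {n d d' : ℕ} (E : Fin n → Matrix (Fin d') (Fin d) ℂ)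
    (hE : ∑ k, (E k)ᴴ * E k = 1) (hn : (n : ℤ) ^ 2 < 2 * (d : ℤ) - 1) :
    ∃ ψ φ : Fin d → ℂ, star ψ ⬝ᵥ ψ = 1 ∧ star φ ⬝ᵥ φ = 1 ∧
      (channelApply E (vecMulVec ψ (star ψ)) *
        channelApply E (vecMulVec φ (star φ))).trace = 0 := by
  classical
  rcases Nat.eq_zero_or_pos n with hn0 | hn1
  · exfalso
    subst hn0
    have hd1 : 1 ≤ d := by
      have h0 : ((0:ℕ) : ℤ)^2 < 2*(d:ℤ) - 1 := hn
      omega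
    simp only [Finset.univ_eq_empty, Finset.sum_empty] at hE
    have := congrFun (congrFun hE ⟨0, by omega⟩) ⟨0, by omega⟩
    simp only [Matrix.zero_apply, Matrix.one_apply_eq] at this
    exact one_ne_zero this.symm
  · have hn1' : (1:ℤ) ≤ (n:ℤ) := by exact_mod_cast hn1
    have hd : 2 ≤ d := by nlinarith
    have hmd : n*n + 1 < 2*d := by
      have hcast : ((n*n : ℕ):ℤ) = (n:ℤ)^2 := by push_cast; ring
      omega
    set M : Fin n → Fin n → Matrix (Fin d) (Fin d) ℂ := fun j k => (E j)ᴴ * E k with hM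
    set P2 : Fin n × Fin n → MvPolynomial (Fin d ⊕ Fin d) ℂ := fun jk =>
      ∑ a, ∑ b, MvPolynomial.C (M jk.1 jk.2 a b) * (X (Sum.inl a) * X (Sum.inr b)) with hP2
    set pp : Fin (n*n) → MvPolynomial (Fin d ⊕ Fin d) ℂ :=
      fun i => P2 (finProdFinEquiv.symm i) with hpp
    have hXXmem : ∀ a b : Fin d, (X (Sum.inl a) * X (Sum.inr b) :
        MvPolynomial (Fin d ⊕ Fin d) ℂ) ∈ Vsp d 1 := by
      intro a b
      have hX : (X (Sum.inl a) * X (Sum.inr b) : MvPolynomial (Fin d ⊕ Fin d) ℂ)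
          = monomial (Finsupp.single (Sum.inl a) 1 + Finsupp.single (Sum.inr b) 1) 1 := by
        rw [X, X, monomial_mul, one_mul]
      rw [hX]
      have hwsingle : ∀ (w : (Fin d ⊕ Fin d) → ℕ) (i : Fin d ⊕ Fin d) (k : ℕ),
          Finsupp.weight w (Finsupp.single i k) = k * w i := by
        intro w i k
        rw [Finsupp.weight_apply, Finsupp.sum_single_index] <;> simp
      constructor
      · apply isWeightedHomogeneous_monomial
        rw [map_add, hwsingle, hwsingle]
        rfl
      · apply isWeightedHomogeneous_monomial
        rw [map_add, hwsingle, hwsingle]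
        rfl
    have hp : ∀ i, pp i ∈ Vsp d 1 := by
      intro i
      rw [hpp]
      apply Submodule.sum_mem
      intro a _
      apply Submodule.sum_mem
      intro b _
      rw [MvPolynomial.C_mul']
      exact Submodule.smul_mem _ _ (hXXmem a b)
    obtain ⟨x, y, hx0, hy0, hvp⟩ := AuxPoly.bilinear_system_zero hd
      (Nat.mul_pos hn1 hn1) (by omega) pp hp
    have heval : ∀ j k : Fin n, ∑ a, ∑ b, M j k a b * x a * y b = 0 := by
      intro j k
      have h1 := hvp (finProdFinEquiv (j, k))
      rw [hpp] at h1
      simp only [Equiv.symm_apply_apply] at h1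
      rw [hP2] at h1
      simp only [map_sum, eval_mul, eval_C, eval_X, Sum.elim_inl, Sum.elim_inr] at h1
      calc ∑ a, ∑ b, M j k a b * x a * y b
          = ∑ a, ∑ b, M j k a b * (Sum.elim x y (Sum.inl a) * Sum.elim x y (Sum.inr b)) := by
            apply Finset.sum_congr rfl; intro a _
            apply Finset.sum_congr rfl; intro b _
            simp only [Sum.elim_inl, Sum.elim_inr]; ring
        _ = 0 := h1
    -- normalization
    obtain ⟨ax, hax⟩ := Function.ne_iff.1 hx0
    obtain ⟨ay, hay⟩ := Function.ne_iff.1 hy0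
    set t1 : ℝ := ∑ a, Complex.normSq (x a) with ht1
    set t2 : ℝ := ∑ b, Complex.normSq (y b) with ht2
    have ht1pos : 0 < t1 :=
      Finset.sum_pos' (fun a _ => Complex.normSq_nonneg _)
        ⟨ax, Finset.mem_univ _, Complex.normSq_pos.2 (by simpa using hax)⟩
    have ht2pos : 0 < t2 :=
      Finset.sum_pos' (fun b _ => Complex.normSq_nonneg _)
        ⟨ay, Finset.mem_univ _, Complex.normSq_pos.2 (by simpa using hay)⟩
    set c1 : ℝ := (Real.sqrt t1)⁻¹ with hc1
    set c2 : ℝ := (Real.sqrt t2)⁻¹ with hc2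
    have hc1sq : c1^2 * t1 = 1 := by
      rw [hc1, inv_pow, Real.sq_sqrt ht1pos.le]
      exact inv_mul_cancel₀ ht1pos.ne'
    have hc2sq : c2^2 * t2 = 1 := by
      rw [hc2, inv_pow, Real.sq_sqrt ht2pos.le]
      exact inv_mul_cancel₀ ht2pos.ne'
    set ψ : Fin d → ℂ := fun a => (c1:ℂ) * star (x a) with hψ
    set φ : Fin d → ℂ := fun b => (c2:ℂ) * y b with hφ
    have hψa : ∀ a, star (ψ a) = (c1:ℂ) * x a := by
      intro a
      rw [hψ]
      simp only [star_mul', star_star, Complex.star_def, Complex.conj_ofReal, Complex.conj_conj]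
    refine ⟨ψ, φ, ?_, ?_, ?_⟩
    · -- star ψ ⬝ᵥ ψ = 1
      have hterm : ∀ a, star (ψ a) * ψ a = (c1:ℂ)^2 * ((Complex.normSq (x a) : ℂ)) := by
        intro a
        rw [hψa a, hψ]
        calc ((c1:ℂ) * x a) * ((c1:ℂ) * star (x a))
            = (c1:ℂ)^2 * (x a * star (x a)) := by ring
          _ = (c1:ℂ)^2 * ((Complex.normSq (x a) : ℂ)) := by
              rw [Complex.star_def, Complex.mul_conj]
      have hdot : star ψ ⬝ᵥ ψ = ∑ a, star (ψ a) * ψ a := rfl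
      rw [hdot, Finset.sum_congr rfl (fun a _ => hterm a), ← Finset.mul_sum]
      have hcast : ∑ a, ((Complex.normSq (x a) : ℂ)) = ((t1 : ℝ) : ℂ) := by
        rw [ht1]
        push_cast
        rfl
      rw [hcast, ← Complex.ofReal_pow, ← Complex.ofReal_mul, hc1sq, Complex.ofReal_one]
    · -- star φ ⬝ᵥ φ = 1
      have hterm : ∀ b, star (φ b) * φ b = (c2:ℂ)^2 * ((Complex.normSq (y b) : ℂ)) := by
        intro b
        rw [hφ]
        simp only [star_mul', Complex.star_def, Complex.conj_ofReal]
        calc ((c2:ℂ) * (starRingEnd ℂ) (y b)) * ((c2:ℂ) * y b)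
            = (c2:ℂ)^2 * (y b * (starRingEnd ℂ) (y b)) := by ring
          _ = (c2:ℂ)^2 * ((Complex.normSq (y b) : ℂ)) := by rw [Complex.mul_conj]
      have hdot : star φ ⬝ᵥ φ = ∑ b, star (φ b) * φ b := rfl
      rw [hdot, Finset.sum_congr rfl (fun b _ => hterm b), ← Finset.mul_sum]
      have hcast : ∑ b, ((Complex.normSq (y b) : ℂ)) = ((t2 : ℝ) : ℂ) := by
        rw [ht2]
        push_cast
        rfl
      rw [hcast, ← Complex.ofReal_pow, ← Complex.ofReal_mul, hc2sq, Complex.ofReal_one]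
    · -- trace zero
      apply trace_zero_of_orth
      intro j k
      have hkey : star ψ ⬝ᵥ (((E j)ᴴ * E k) *ᵥ φ)
          = (c1:ℂ) * (c2:ℂ) * (∑ a, ∑ b, M j k a b * x a * y b) := by
        have hdot : star ψ ⬝ᵥ (((E j)ᴴ * E k) *ᵥ φ)
            = ∑ a, star (ψ a) * (∑ b, ((E j)ᴴ * E k) a b * φ b) := rfl
        rw [hdot, Finset.mul_sum]
        apply Finset.sum_congr rfl
        intro a _
        rw [hψa a]
        simp only [hφ]
        rw [Finset.mul_sum, Finset.mul_sum]
        apply Finset.sum_congr rfl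
        intro b _
        simp only [hM]
        ring
      rw [hkey, heval j k, mul_zero]
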